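/- (SDP characterization of the twisted-channel simulation cost.) For a Hermitian-preserving map ℰ with Choi matrix J^ℰ, the minimal α ≥ 0 such that ℰ = α·𝒯 for some twisted channel 𝒯 equals the optimal value of: minimize α subject to J^ℰ = M⁺ − M⁻, M^± ⪰ 0, and tr_B[M⁺ + M⁻] = α·𝟙_A. -/

import Mathlib

open Matrix BigOperators ComplexOrder

/-- The Choi matrix of a linear map between matrix algebras:
`J^E = Σ_{j,k} |j⟩⟨k| ⊗ E(|j⟩⟨k|)`, indexed by pairs. -/
noncomputable def choi {dA dB : ℕ}
    (E : Matrix (Fin dA) (Fin dA) ℂ →ₗ[ℂ] Matrix (Fin dB) (Fin dB) ℂ) :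
    Matrix (Fin dA × Fin dB) (Fin dA × Fin dB) ℂ :=
  fun p q => E (Matrix.single p.1 q.1 1) p.2 q.2

/-- A map is Hermitian-preserving if it maps Hermitian matrices to Hermitian matrices. -/
def HermitianPreserving {dA dB : ℕ}
    (E : Matrix (Fin dA) (Fin dA) ℂ →ₗ[ℂ] Matrix (Fin dB) (Fin dB) ℂ) : Prop :=
  ∀ H : Matrix (Fin dA) (Fin dA) ℂ, H.IsHermitian → (E H).IsHermitian

/-- Trace-preserving. -/
def IsTP {dA dB : ℕ}
    (E : Matrix (Fin dA) (Fin dA) ℂ →ₗ[ℂ] Matrix (Fin dB) (Fin dB) ℂ) : Prop :=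
  ∀ X : Matrix (Fin dA) (Fin dA) ℂ, (E X).trace = X.trace

/-- Trace-non-increasing on positive semidefinite inputs. -/
def IsTNI {dA dB : ℕ}
    (E : Matrix (Fin dA) (Fin dA) ℂ →ₗ[ℂ] Matrix (Fin dB) (Fin dB) ℂ) : Prop :=
  ∀ ρ : Matrix (Fin dA) (Fin dA) ℂ, ρ.PosSemidef → (E ρ).trace ≤ ρ.trace

/-- Completely positive (characterized via positivity of the Choi matrix) and trace-preserving. -/
def IsCPTP {dA dB : ℕ}
    (E : Matrix (Fin dA) (Fin dA) ℂ →ₗ[ℂ] Matrix (Fin dB) (Fin dB) ℂ) : Prop :=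
  (choi E).PosSemidef ∧ IsTP E

/-- Completely positive and trace-non-increasing. -/
def IsCPTN {dA dB : ℕ}
    (E : Matrix (Fin dA) (Fin dA) ℂ →ₗ[ℂ] Matrix (Fin dB) (Fin dB) ℂ) : Prop :=
  (choi E).PosSemidef ∧ IsTNI E

/-- A twisted channel: `T = Σ_j s_j M_j` with `s_j ∈ {+1,-1}` and `{M_j}` a quantum
instrument (each `M_j` CPTN and `Σ_j M_j` CPTP). -/
def TwistedChannel {dA dB : ℕ}
    (T : Matrix (Fin dA) (Fin dA) ℂ →ₗ[ℂ] Matrix (Fin dB) (Fin dB) ℂ) : Prop :=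
  ∃ (n : ℕ) (s : Fin n → ℂ)
    (M : Fin n → (Matrix (Fin dA) (Fin dA) ℂ →ₗ[ℂ] Matrix (Fin dB) (Fin dB) ℂ)),
    (∀ j, s j = 1 ∨ s j = -1) ∧ (∀ j, IsCPTN (M j)) ∧ IsCPTP (∑ j, M j) ∧
    T = ∑ j, s j • M j

/-- Partial trace over the second (B) factor. -/
noncomputable def ptraceB {dA dB : ℕ}
    (M : Matrix (Fin dA × Fin dB) (Fin dA × Fin dB) ℂ) : Matrix (Fin dA) (Fin dA) ℂ :=
  fun a a' => ∑ b, M (a, b) (a', b)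


section Helpers

variable {dA dB : ℕ}

/-- Reconstruct a linear map from a Choi matrix. -/
noncomputable def fromChoi (M : Matrix (Fin dA × Fin dB) (Fin dA × Fin dB) ℂ) :
    Matrix (Fin dA) (Fin dA) ℂ →ₗ[ℂ] Matrix (Fin dB) (Fin dB) ℂ where
  toFun X := Matrix.of fun b b' => ∑ j, ∑ k, X j k * M (j, b) (k, b')
  map_add' X Y := by
    ext b b'
    simp [Matrix.add_apply, add_mul, Finset.sum_add_distrib]
  map_smul' c X := by
    ext b b'
    simp [Matrix.smul_apply, Finset.mul_sum, mul_assoc, smul_eq_mul]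

lemma choi_fromChoi (M : Matrix (Fin dA × Fin dB) (Fin dA × Fin dB) ℂ) :
    choi (fromChoi M) = M := by
  funext p q
  simp only [choi, fromChoi, LinearMap.coe_mk, AddHom.coe_mk, Matrix.of_apply,
    Matrix.single, ite_mul, one_mul, zero_mul]
  rw [Finset.sum_comm]
  simp [Finset.sum_ite_eq, ite_and]

lemma fromChoi_choi (E : Matrix (Fin dA) (Fin dA) ℂ →ₗ[ℂ] Matrix (Fin dB) (Fin dB) ℂ) :
    fromChoi (choi E) = E := by
  apply LinearMap.ext
  intro X
  conv_rhs => rw [Matrix.matrix_eq_sum_single X]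
  rw [map_sum]
  funext b b'
  simp only [fromChoi, LinearMap.coe_mk, AddHom.coe_mk, Matrix.of_apply, choi,
    Matrix.sum_apply]
  refine Finset.sum_congr rfl fun j _ => ?_
  rw [map_sum]
  simp only [Matrix.sum_apply]
  refine Finset.sum_congr rfl fun k _ => ?_
  have : Matrix.single j k (X j k) = X j k • Matrix.single j k 1 := by
    rw [Matrix.smul_single, smul_eq_mul, mul_one]
  rw [this, _root_.map_smul]
  simp [mul_comm]

end Helpers
section Helpers2

variable {dA dB : ℕ}

lemma choi_inj {E F : Matrix (Fin dA) (Fin dA) ℂ →ₗ[ℂ] Matrix (Fin dB) (Fin dB) ℂ}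
    (h : choi E = choi F) : E = F := by
  rw [← fromChoi_choi E, ← fromChoi_choi F, h]

lemma choi_smul (c : ℂ) (E : Matrix (Fin dA) (Fin dA) ℂ →ₗ[ℂ] Matrix (Fin dB) (Fin dB) ℂ) :
    choi (c • E) = c • choi E := by
  funext p q; simp [choi]

lemma choi_sum {n : ℕ} (M : Fin n → (Matrix (Fin dA) (Fin dA) ℂ →ₗ[ℂ] Matrix (Fin dB) (Fin dB) ℂ)) :
    choi (∑ j, M j) = ∑ j, choi (M j) := by
  funext p q
  simp [choi, Matrix.sum_apply, LinearMap.sum_apply]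

lemma choi_sub (E F : Matrix (Fin dA) (Fin dA) ℂ →ₗ[ℂ] Matrix (Fin dB) (Fin dB) ℂ) :
    choi (E - F) = choi E - choi F := by
  funext p q; simp [choi]

lemma ptraceB_smul (c : ℂ) (M : Matrix (Fin dA × Fin dB) (Fin dA × Fin dB) ℂ) :
    ptraceB (c • M) = c • ptraceB M := by
  funext a a'; simp [ptraceB, Finset.mul_sum]

lemma ptraceB_add (M N : Matrix (Fin dA × Fin dB) (Fin dA × Fin dB) ℂ) :
    ptraceB (M + N) = ptraceB M + ptraceB N := by
  funext a a'; simp [ptraceB, Finset.sum_add_distrib]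

lemma trace_fromChoi (M : Matrix (Fin dA × Fin dB) (Fin dA × Fin dB) ℂ)
    (X : Matrix (Fin dA) (Fin dA) ℂ) :
    ((fromChoi M) X).trace = ∑ j, ∑ k, X j k * ptraceB M j k := by
  simp only [Matrix.trace, Matrix.diag, fromChoi, LinearMap.coe_mk, AddHom.coe_mk,
    Matrix.of_apply, ptraceB, Finset.mul_sum]
  rw [Finset.sum_comm]
  refine Finset.sum_congr rfl fun j _ => Finset.sum_comm

lemma sum_mul_one_eq_trace (X : Matrix (Fin dA) (Fin dA) ℂ) :
    ∑ j, ∑ k, X j k * (1 : Matrix (Fin dA) (Fin dA) ℂ) j k = X.trace := by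
  simp [Matrix.one_apply, Matrix.trace, Matrix.diag]

lemma psd_smul {c : ℝ} (hc : 0 ≤ c) {n : Type*} [Fintype n] {M : Matrix n n ℂ}
    (hM : M.PosSemidef) : ((c : ℂ) • M).PosSemidef := by
  rw [Matrix.posSemidef_iff_dotProduct_mulVec]
  constructor
  · show _ = _
    funext p q
    simp only [Matrix.conjTranspose_apply, Matrix.smul_apply, smul_eq_mul, star_mul',
      Complex.star_def, Complex.conj_ofReal]
    have h := congrFun (congrFun hM.1 p) q
    simp only [Matrix.conjTranspose_apply, Complex.star_def] at h
    rw [h]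
  · intro x
    have := hM.dotProduct_mulVec_nonneg x
    rw [Matrix.smul_mulVec, dotProduct_smul]
    exact smul_nonneg (by exact_mod_cast Complex.zero_le_real.mpr hc) this

lemma psd_diag_nonneg {n : Type*} [Fintype n] [DecidableEq n] {M : Matrix n n ℂ}
    (hM : M.PosSemidef) (i : n) : 0 ≤ M i i := by
  exact hM.diag_nonneg

lemma psd_trace_nonneg {n : Type*} [Fintype n] [DecidableEq n] {M : Matrix n n ℂ}
    (hM : M.PosSemidef) : 0 ≤ M.trace :=
  Finset.sum_nonneg fun i _ => psd_diag_nonneg hM i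

lemma psd_exists_conjTranspose_mul_self {n : Type*} [Fintype n] [DecidableEq n]
    {M : Matrix n n ℂ} (hM : M.PosSemidef) : ∃ B : Matrix n n ℂ, M = Bᴴ * B := by
  open scoped MatrixOrder Matrix.Norms.L2Operator in
  obtain ⟨B, hB⟩ := CStarAlgebra.nonneg_iff_eq_star_mul_self.mp hM.nonneg
  exact ⟨B, hB⟩

lemma pairing_nonneg {n : Type*} [Fintype n] [DecidableEq n]
    {ρ N : Matrix n n ℂ} (hρ : ρ.PosSemidef) (hN : N.PosSemidef) :
    0 ≤ ∑ j, ∑ k, ρ j k * N j k := by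
  have h1 : ∑ j, ∑ k, ρ j k * N j k = (ρ * Nᵀ).trace := by
    simp [Matrix.trace, Matrix.diag, Matrix.mul_apply, Matrix.transpose_apply]
  obtain ⟨B, rfl⟩ := psd_exists_conjTranspose_mul_self hN
  have h2 : (Bᴴ * B)ᵀ = (B.map (starRingEnd ℂ))ᴴ * (B.map (starRingEnd ℂ)) := by
    funext p q
    simp [Matrix.transpose_apply, Matrix.mul_apply, Matrix.conjTranspose_apply, mul_comm]
  rw [h1, h2, ← Matrix.mul_assoc, Matrix.trace_mul_cycle]
  exact psd_trace_nonneg ((hρ.mul_mul_conjTranspose_same (B.map (starRingEnd ℂ))))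

lemma psd_trace_zero {n : Type*} [Fintype n] [DecidableEq n] {M : Matrix n n ℂ}
    (hM : M.PosSemidef) (h : M.trace = 0) : M = 0 := by
  obtain ⟨B, rfl⟩ := psd_exists_conjTranspose_mul_self hM
  have hB : B = 0 := by
    have h1 : ∑ i, ∑ l, (Complex.normSq (B l i) : ℂ) = 0 := by
      rw [← h]
      simp only [Matrix.trace, Matrix.diag, Matrix.mul_apply, Matrix.conjTranspose_apply]
      refine Finset.sum_congr rfl fun i _ => Finset.sum_congr rfl fun l _ => ?_
      rw [Complex.normSq_eq_conj_mul_self]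
      rfl
    have h2 : ∑ i, ∑ l, Complex.normSq (B l i) = 0 := by
      have := congrArg Complex.re h1
      simpa using this
    funext l i
    have hi := (Finset.sum_eq_zero_iff_of_nonneg (fun i _ => Finset.sum_nonneg
      (fun l _ => Complex.normSq_nonneg _))).mp h2 i (Finset.mem_univ i)
    have hl := (Finset.sum_eq_zero_iff_of_nonneg (fun l _ => Complex.normSq_nonneg _)).mp
      hi l (Finset.mem_univ l)
    simpa [Complex.normSq_eq_zero] using hl
  rw [hB]; simp

lemma psd_sum {n : ℕ} {m : Type*} [Fintype m] (M : Fin n → Matrix m m ℂ)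
    (h : ∀ j, (M j).PosSemidef) : (∑ j, M j).PosSemidef := by
  classical
  induction n with
  | zero => simpa using Matrix.PosSemidef.zero
  | succ n ih =>
      rw [Fin.sum_univ_succ]
      exact (h 0).add (ih _ (fun j => h j.succ))

lemma ptraceB_psd {M : Matrix (Fin dA × Fin dB) (Fin dA × Fin dB) ℂ}
    (hM : M.PosSemidef) : (ptraceB M).PosSemidef := by
  rw [Matrix.posSemidef_iff_dotProduct_mulVec]
  constructor
  · show _ = _
    funext a a'
    simp only [Matrix.conjTranspose_apply, ptraceB, star_sum]
    refine Finset.sum_congr rfl fun b _ => ?_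
    rw [← Matrix.conjTranspose_apply, hM.1]
  · intro x
    have hb : ∀ b : Fin dB,
        dotProduct (star fun p : Fin dA × Fin dB => if p.2 = b then x p.1 else 0)
          (M.mulVec fun p : Fin dA × Fin dB => if p.2 = b then x p.1 else 0)
        = ∑ a, ∑ a', star (x a) * (M (a, b) (a', b) * x a') := by
      intro b
      simp only [dotProduct, Matrix.mulVec, Pi.star_apply, Fintype.sum_prod_type,
        apply_ite (star : ℂ → ℂ), star_zero, ite_mul, mul_ite, zero_mul, mul_zero,
        Finset.sum_ite_eq', Finset.mem_univ, if_true, Finset.mul_sum]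
      refine Finset.sum_congr rfl fun a _ => ?_
      rw [Finset.sum_comm]
      simp
    have key : dotProduct (star x) ((ptraceB M).mulVec x)
        = ∑ b, ∑ a, ∑ a', star (x a) * (M (a, b) (a', b) * x a') := by
      simp only [dotProduct, Matrix.mulVec, ptraceB, Pi.star_apply,
        Finset.sum_mul, Finset.mul_sum]
      have step : ∀ a : Fin dA, ∑ a' : Fin dA, ∑ b : Fin dB,
          star (x a) * (M (a, b) (a', b) * x a')
          = ∑ b : Fin dB, ∑ a' : Fin dA, star (x a) * (M (a, b) (a', b) * x a') :=
        fun a => Finset.sum_comm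
      calc ∑ a, ∑ a', ∑ b, star (x a) * (M (a, b) (a', b) * x a')
          = ∑ a, ∑ b, ∑ a', star (x a) * (M (a, b) (a', b) * x a') :=
            Finset.sum_congr rfl fun a _ => step a
        _ = ∑ b, ∑ a, ∑ a', star (x a) * (M (a, b) (a', b) * x a') := Finset.sum_comm
    rw [key, ← Finset.sum_congr rfl fun b _ => hb b]
    exact Finset.sum_nonneg fun b _ => hM.dotProduct_mulVec_nonneg _

end Helpers2
section Helpers3

variable {dA dB : ℕ}

lemma trace_stdBasis (a a' : Fin dA) :
    (Matrix.single a a' (1 : ℂ)).trace = (1 : Matrix (Fin dA) (Fin dA) ℂ) a a' := by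
  simp only [Matrix.trace, Matrix.diag, Matrix.single, Matrix.of_apply,
    Matrix.one_apply]
  by_cases h : a = a'
  · subst h; simp
  · rw [if_neg h]
    refine Finset.sum_eq_zero fun j _ => ?_
    by_cases hj : a = j
    · subst hj; simp [Ne.symm, h]
    · simp [hj]

lemma ptraceB_choi_TP {F : Matrix (Fin dA) (Fin dA) ℂ →ₗ[ℂ] Matrix (Fin dB) (Fin dB) ℂ}
    (hF : IsTP F) : ptraceB (choi F) = 1 := by
  funext a a'
  have h1 : ptraceB (choi F) a a' = (F (Matrix.single a a' 1)).trace := by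
    simp [ptraceB, choi, Matrix.trace, Matrix.diag]
  rw [h1, hF, trace_stdBasis]

end Helpers3
section Helpers4

variable {dA dB : ℕ}

lemma choi_zero : choi (0 : Matrix (Fin dA) (Fin dA) ℂ →ₗ[ℂ] Matrix (Fin dB) (Fin dB) ℂ) = 0 := by
  funext p q; simp [choi]

lemma choi_add (E F : Matrix (Fin dA) (Fin dA) ℂ →ₗ[ℂ] Matrix (Fin dB) (Fin dB) ℂ) :
    choi (E + F) = choi E + choi F := by
  funext p q; simp [choi]

lemma psd_sum' {ι : Type*} (t : Finset ι) {m : Type*} [Fintype m] (M : ι → Matrix m m ℂ)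
    (h : ∀ j ∈ t, (M j).PosSemidef) : (∑ j ∈ t, M j).PosSemidef :=
  Finset.sum_induction M _ (fun _ _ ha hb => ha.add hb) Matrix.PosSemidef.zero h

lemma ptraceB_one :
    ptraceB (1 : Matrix (Fin dA × Fin dB) (Fin dA × Fin dB) ℂ)
      = (dB : ℂ) • (1 : Matrix (Fin dA) (Fin dA) ℂ) := by
  funext a a'
  simp only [ptraceB, Matrix.one_apply, Matrix.smul_apply, Prod.mk.injEq, smul_eq_mul]
  by_cases h : a = a'
  · subst h; simp
  · simp [h]

lemma twisted_exists (hB : 0 < dB) :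
    ∃ T : Matrix (Fin dA) (Fin dA) ℂ →ₗ[ℂ] Matrix (Fin dB) (Fin dB) ℂ, TwistedChannel T := by
  classical
  set c : ℝ := (dB : ℝ)⁻¹ with hc
  have hc0 : 0 ≤ c := by positivity
  set R := fromChoi ((c : ℂ) • (1 : Matrix (Fin dA × Fin dB) (Fin dA × Fin dB) ℂ)) with hR
  have hRchoi : choi R = (c : ℂ) • 1 := choi_fromChoi _
  have hpt : ptraceB ((c : ℂ) • (1 : Matrix (Fin dA × Fin dB) (Fin dA × Fin dB) ℂ)) = 1 := by
    rw [ptraceB_smul, ptraceB_one, smul_smul]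
    have : (c : ℂ) * (dB : ℂ) = 1 := by
      rw [hc]
      push_cast
      field_simp
    rw [this, one_smul]
  have hTP : IsTP R := by
    intro X
    rw [hR, trace_fromChoi, hpt, sum_mul_one_eq_trace]
  have hCPTN : IsCPTN R :=
    ⟨hRchoi ▸ psd_smul hc0 Matrix.PosSemidef.one, fun ρ _ => le_of_eq (hTP ρ)⟩
  refine ⟨R, 1, fun _ => 1, fun _ => R, fun _ => Or.inl rfl, fun _ => hCPTN, ?_, ?_⟩
  · have : (∑ _j : Fin 1, R) = R := by simp
    rw [this]
    exact ⟨hRchoi ▸ psd_smul hc0 Matrix.PosSemidef.one, hTP⟩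
  · simp

end Helpers4
theorem cost_sdp {dA dB : ℕ} (E : Matrix (Fin dA) (Fin dA) ℂ →ₗ[ℂ] Matrix (Fin dB) (Fin dB) ℂ) (hE : HermitianPreserving E) :
    sInf {α : ℝ | 0 ≤ α ∧ ∃ T : Matrix (Fin dA) (Fin dA) ℂ →ₗ[ℂ] Matrix (Fin dB) (Fin dB) ℂ, TwistedChannel T ∧ E = (α : ℂ) • T} =
    sInf {α : ℝ | ∃ Mp Mn : Matrix (Fin dA × Fin dB) (Fin dA × Fin dB) ℂ,
      Mp.PosSemidef ∧ Mn.PosSemidef ∧ choi E = Mp - Mn ∧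
      ptraceB (Mp + Mn) = (α : ℂ) • (1 : Matrix (Fin dA) (Fin dA) ℂ)} := by
  classical
  rcases Nat.eq_zero_or_pos dA with hA | hA
  · -- dA = 0 : LHS set is `Ici 0`, RHS set is `univ`
    subst hA
    have hE0 : E = 0 := by
      refine LinearMap.ext fun X => ?_
      have hX : X = 0 := by funext a; exact a.elim0
      rw [hX, map_zero, LinearMap.zero_apply]
    have hS1 : {α : ℝ | 0 ≤ α ∧ ∃ T : Matrix (Fin 0) (Fin 0) ℂ →ₗ[ℂ] Matrix (Fin dB) (Fin dB) ℂ,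
        TwistedChannel T ∧ E = (α : ℂ) • T} = Set.Ici 0 := by
      ext α
      simp only [Set.mem_setOf_eq, Set.mem_Ici]
      constructor
      · rintro ⟨h, -⟩; exact h
      · intro h
        refine ⟨h, 0, ⟨0, Fin.elim0, Fin.elim0, fun j => j.elim0, fun j => j.elim0, ?_, by simp⟩,
          by rw [hE0]; simp⟩
        constructor
        · rw [show (∑ j : Fin 0, Fin.elim0 j) =
            (0 : Matrix (Fin 0) (Fin 0) ℂ →ₗ[ℂ] Matrix (Fin dB) (Fin dB) ℂ) by simp, choi_zero]
          exact Matrix.PosSemidef.zero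
        · intro X
          simp [Matrix.trace]
    have hS2 : {α : ℝ | ∃ Mp Mn : Matrix (Fin 0 × Fin dB) (Fin 0 × Fin dB) ℂ,
        Mp.PosSemidef ∧ Mn.PosSemidef ∧ choi E = Mp - Mn ∧
        ptraceB (Mp + Mn) = (α : ℂ) • (1 : Matrix (Fin 0) (Fin 0) ℂ)} = Set.univ := by
      ext α
      simp only [Set.mem_setOf_eq, Set.mem_univ, iff_true]
      refine ⟨0, 0, Matrix.PosSemidef.zero, Matrix.PosSemidef.zero, ?_, ?_⟩
      · funext p q; exact p.1.elim0
      · funext a; exact a.elim0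
    rw [hS1, hS2, csInf_Ici, Real.sInf_of_not_bddBelow]
    rintro ⟨x, hx⟩
    have := hx (Set.mem_univ (x - 1))
    linarith
  rcases Nat.eq_zero_or_pos dB with hB | hB
  · -- dB = 0, dA > 0 : LHS set is `∅`, RHS set is `{0}`
    subst hB
    have hS1 : {α : ℝ | 0 ≤ α ∧ ∃ T : Matrix (Fin dA) (Fin dA) ℂ →ₗ[ℂ] Matrix (Fin 0) (Fin 0) ℂ,
        TwistedChannel T ∧ E = (α : ℂ) • T} = ∅ := by
      ext α
      simp only [Set.mem_setOf_eq, Set.mem_empty_iff_false, iff_false, not_and]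
      rintro hα ⟨T, ⟨n, s, M, hs, hM, ⟨hcp, htp⟩, hT⟩, hET⟩
      have h1 : ((∑ j, M j) (1 : Matrix (Fin dA) (Fin dA) ℂ)).trace = 0 := by
        simp [Matrix.trace]
      rw [htp, Matrix.trace_one] at h1
      have h2 : (Fintype.card (Fin dA) : ℂ) ≠ 0 := by
        simp only [Fintype.card_fin]
        exact_mod_cast hA.ne'
      exact h2 h1
    have hS2 : {α : ℝ | ∃ Mp Mn : Matrix (Fin dA × Fin 0) (Fin dA × Fin 0) ℂ,
        Mp.PosSemidef ∧ Mn.PosSemidef ∧ choi E = Mp - Mn ∧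
        ptraceB (Mp + Mn) = (α : ℂ) • (1 : Matrix (Fin dA) (Fin dA) ℂ)} = {0} := by
      ext α
      simp only [Set.mem_setOf_eq, Set.mem_singleton_iff]
      constructor
      · rintro ⟨Mp, Mn, -, -, -, htr⟩
        have h1 := congrFun (congrFun htr ⟨0, hA⟩) ⟨0, hA⟩
        simp only [ptraceB, Matrix.smul_apply, Matrix.one_apply_eq, smul_eq_mul, mul_one] at h1
        have h2 : (α : ℂ) = 0 := by
          rw [← h1]
          simp
        exact_mod_cast h2
      · rintro rfl
        refine ⟨0, 0, Matrix.PosSemidef.zero, Matrix.PosSemidef.zero, ?_, ?_⟩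
        · funext p q; exact p.2.elim0
        · funext a a'; simp [ptraceB]
    rw [hS1, hS2, Real.sInf_empty, csInf_singleton]
  · -- main case : the two sets coincide
    congr 1
    ext α
    simp only [Set.mem_setOf_eq]
    constructor
    · rintro ⟨hα, T, ⟨n, s, M, hs, hM, ⟨hcp, htp⟩, hT⟩, hET⟩
      set P : Fin n → Matrix (Fin dA × Fin dB) (Fin dA × Fin dB) ℂ := fun j => choi (M j) with hP
      refine ⟨(α : ℂ) • ∑ j ∈ Finset.univ.filter (fun j => s j = 1), P j,
        (α : ℂ) • ∑ j ∈ Finset.univ.filter (fun j => ¬ s j = 1), P j,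
        psd_smul hα (psd_sum' _ _ (fun j _ => (hM j).1)),
        psd_smul hα (psd_sum' _ _ (fun j _ => (hM j).1)), ?_, ?_⟩
      · have h1 : choi T = ∑ j, s j • P j := by
          rw [hT, choi_sum]
          exact Finset.sum_congr rfl fun j _ => choi_smul _ _
        have h2 : ∑ j, s j • P j
            = ∑ j ∈ Finset.univ.filter (fun j => s j = 1), P j
              - ∑ j ∈ Finset.univ.filter (fun j => ¬ s j = 1), P j := by
          rw [← Finset.sum_filter_add_sum_filter_not Finset.univ (fun j => s j = 1)
            (fun j => s j • P j)]
          have e1 : ∑ j ∈ Finset.univ.filter (fun j => s j = 1), s j • P j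
              = ∑ j ∈ Finset.univ.filter (fun j => s j = 1), P j :=
            Finset.sum_congr rfl fun j hj => by
              rw [(Finset.mem_filter.mp hj).2, one_smul]
          have e2 : ∑ j ∈ Finset.univ.filter (fun j => ¬ s j = 1), s j • P j
              = - ∑ j ∈ Finset.univ.filter (fun j => ¬ s j = 1), P j := by
            rw [← Finset.sum_neg_distrib]
            refine Finset.sum_congr rfl fun j hj => ?_
            rcases hs j with h | h
            · exact absurd h (Finset.mem_filter.mp hj).2
            · rw [h, neg_smul, one_smul]
          rw [e1, e2, ← sub_eq_add_neg]
        rw [hET, choi_smul, h1, h2, smul_sub]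
      · have h3 : (α : ℂ) • ∑ j ∈ Finset.univ.filter (fun j => s j = 1), P j
            + (α : ℂ) • ∑ j ∈ Finset.univ.filter (fun j => ¬ s j = 1), P j
            = (α : ℂ) • choi (∑ j, M j) := by
          rw [← smul_add, Finset.sum_filter_add_sum_filter_not, choi_sum]
        rw [h3, ptraceB_smul, ptraceB_choi_TP htp]
    · rintro ⟨Mp, Mn, hp, hn, hchoi, htr⟩
      have hα : 0 ≤ α := by
        have h1 := congrFun (congrFun htr ⟨0, hA⟩) ⟨0, hA⟩
        have h2 : ((α : ℂ) • (1 : Matrix (Fin dA) (Fin dA) ℂ)) ⟨0, hA⟩ ⟨0, hA⟩ = (α : ℂ) := by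
          simp [Matrix.one_apply]
        have h3 : 0 ≤ ptraceB (Mp + Mn) ⟨0, hA⟩ ⟨0, hA⟩ :=
          psd_diag_nonneg (ptraceB_psd (hp.add hn)) _
        rw [h1, h2] at h3
        exact Complex.zero_le_real.mp h3
      rcases eq_or_lt_of_le hα with heq | hpos
      · -- α = 0
        subst heq
        have htr0 : ptraceB (Mp + Mn) = 0 := by simpa using htr
        have htrace : (Mp + Mn).trace = 0 := by
          have e : (Mp + Mn).trace = ∑ a, ptraceB (Mp + Mn) a a := by
            simp [Matrix.trace, Matrix.diag, ptraceB, Fintype.sum_prod_type]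
          rw [e, htr0]
          simp
        rw [Matrix.trace_add] at htrace
        have h1 := psd_trace_nonneg hp
        have h2 := psd_trace_nonneg hn
        have e1 : Mp.trace = -Mn.trace := by linear_combination htrace
        have hp0 : Mp = 0 := psd_trace_zero hp (le_antisymm (e1 ▸ neg_nonpos.mpr h2) h1)
        have e2 : Mn.trace = -Mp.trace := by linear_combination htrace
        have hn0 : Mn = 0 := psd_trace_zero hn (le_antisymm (e2 ▸ neg_nonpos.mpr h1) h2)
        have hE0 : E = 0 := by
          apply choi_inj
          rw [hchoi, hp0, hn0, choi_zero, sub_zero]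
        obtain ⟨T, hT⟩ := twisted_exists (dA := dA) hB
        exact ⟨le_refl 0, T, hT, by rw [hE0]; simp⟩
      · -- 0 < α
        set c : ℝ := α⁻¹ with hcdef
        have hc : 0 ≤ c := le_of_lt (inv_pos.mpr hpos)
        have hcα : (c : ℂ) * (α : ℂ) = 1 := by
          rw [← Complex.ofReal_mul, hcdef, inv_mul_cancel₀ (ne_of_gt hpos), Complex.ofReal_one]
        have hαc : (α : ℂ) * (c : ℂ) = 1 := by rw [mul_comm]; exact hcα
        set Tp := fromChoi ((c : ℂ) • Mp) with hTp
        set Tn := fromChoi ((c : ℂ) • Mn) with hTn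
        have hone : (c : ℂ) • ptraceB (Mp + Mn) = 1 := by
          rw [htr, smul_smul, hcα, one_smul]
        -- traces of the pieces
        have htrTp : ∀ X, (Tp X).trace = ∑ j, ∑ k, X j k * ((c : ℂ) • ptraceB Mp) j k := by
          intro X; rw [hTp, trace_fromChoi, ptraceB_smul]
        have htrTn : ∀ X, (Tn X).trace = ∑ j, ∑ k, X j k * ((c : ℂ) • ptraceB Mn) j k := by
          intro X; rw [hTn, trace_fromChoi, ptraceB_smul]
        have hsplit : (c : ℂ) • ptraceB (Mp + Mn)
            = (c : ℂ) • ptraceB Mp + (c : ℂ) • ptraceB Mn := by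
          rw [ptraceB_add, smul_add]
        have hTNI : ∀ (Mx : Matrix (Fin dA × Fin dB) (Fin dA × Fin dB) ℂ), Mx.PosSemidef →
            (∀ X, ((fromChoi ((c : ℂ) • Mx)) X).trace
              = ∑ j, ∑ k, X j k * ((c : ℂ) • ptraceB Mx) j k) →
            ((c : ℂ) • ptraceB (Mp + Mn) - (c : ℂ) • ptraceB Mx).PosSemidef →
            IsTNI (fromChoi ((c : ℂ) • Mx)) := by
          intro Mx hMx htrx hrest ρ hρ
          have eρ : ρ.trace = ∑ j, ∑ k, ρ j k * ((c : ℂ) • ptraceB (Mp + Mn)) j k := by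
            rw [hone, sum_mul_one_eq_trace]
          have ediff : ρ.trace - ((fromChoi ((c : ℂ) • Mx)) ρ).trace
              = ∑ j, ∑ k, ρ j k
                  * ((c : ℂ) • ptraceB (Mp + Mn) - (c : ℂ) • ptraceB Mx) j k := by
            rw [eρ, htrx ρ, ← Finset.sum_sub_distrib]
            refine Finset.sum_congr rfl fun j _ => ?_
            rw [← Finset.sum_sub_distrib]
            refine Finset.sum_congr rfl fun k _ => ?_
            simp only [Matrix.sub_apply]
            ring
          have hnn := pairing_nonneg hρ hrest
          rw [← ediff] at hnn
          exact sub_nonneg.mp hnn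
        have hCPTNp : IsCPTN Tp := by
          refine ⟨?_, ?_⟩
          · rw [hTp, choi_fromChoi]; exact psd_smul hc hp
          · rw [hTp]
            refine hTNI Mp hp (fun X => by rw [← hTp]; exact htrTp X) ?_
            have e : (c : ℂ) • ptraceB (Mp + Mn) - (c : ℂ) • ptraceB Mp
                = (c : ℂ) • ptraceB Mn := by
              rw [hsplit]; abel
            rw [e]; exact psd_smul hc (ptraceB_psd hn)
        have hCPTNn : IsCPTN Tn := by
          refine ⟨?_, ?_⟩
          · rw [hTn, choi_fromChoi]; exact psd_smul hc hn
          · rw [hTn]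
            refine hTNI Mn hn (fun X => by rw [← hTn]; exact htrTn X) ?_
            have e : (c : ℂ) • ptraceB (Mp + Mn) - (c : ℂ) • ptraceB Mn
                = (c : ℂ) • ptraceB Mp := by
              rw [hsplit]; abel
            rw [e]; exact psd_smul hc (ptraceB_psd hp)
        have hTPsum : IsTP (Tp + Tn) := by
          intro X
          have e0 : ((Tp + Tn) X).trace = (Tp X).trace + (Tn X).trace := by
            simp [LinearMap.add_apply, Matrix.trace_add]
          rw [e0, htrTp, htrTn, ← Finset.sum_add_distrib]
          have e1 : ∀ j ∈ Finset.univ, (∑ k, X j k * ((c : ℂ) • ptraceB Mp) j k)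
              + (∑ k, X j k * ((c : ℂ) • ptraceB Mn) j k)
              = ∑ k, X j k * ((c : ℂ) • ptraceB (Mp + Mn)) j k := by
            intro j _
            rw [← Finset.sum_add_distrib]
            refine Finset.sum_congr rfl fun k _ => ?_
            rw [hsplit, Matrix.add_apply]
            ring
          rw [Finset.sum_congr rfl e1, ← sum_mul_one_eq_trace X]
          refine Finset.sum_congr rfl fun j _ => Finset.sum_congr rfl fun k _ => ?_
          rw [hone]
        have hCPsum : (choi (Tp + Tn)).PosSemidef := by
          rw [choi_add, hTp, hTn, choi_fromChoi, choi_fromChoi, ← smul_add]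
          exact psd_smul hc (hp.add hn)
        set s2 : Fin 2 → ℂ := ![1, -1] with hs2
        set M2 : Fin 2 → (Matrix (Fin dA) (Fin dA) ℂ →ₗ[ℂ] Matrix (Fin dB) (Fin dB) ℂ)
          := ![Tp, Tn] with hM2
        have hsum2 : ∑ j, M2 j = Tp + Tn := by
          rw [Fin.sum_univ_two]; simp [hM2]
        refine ⟨hα, ∑ j, s2 j • M2 j, ⟨2, s2, M2, ?_, ?_, ?_, rfl⟩, ?_⟩
        · intro j; fin_cases j
          · exact Or.inl (by simp [hs2])
          · exact Or.inr (by simp [hs2])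
        · intro j; fin_cases j
          · simpa [hM2] using hCPTNp
          · simpa [hM2] using hCPTNn
        · rw [hsum2]; exact ⟨hCPsum, hTPsum⟩
        · apply choi_inj
          have hsum3 : ∑ j, s2 j • M2 j = Tp - Tn := by
            rw [Fin.sum_univ_two]
            simp only [hs2, hM2, Matrix.cons_val_zero, Matrix.cons_val_one, Matrix.head_cons,
              one_smul, neg_smul, sub_eq_add_neg, neg_one_smul]
            congr 1
            exact neg_one_smul ℂ Tn
          rw [hchoi, choi_smul, hsum3, choi_sub, hTp, hTn, choi_fromChoi, choi_fromChoi,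
            ← smul_sub, smul_smul, hαc, one_smul]
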